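/- Let X be a Coxeter graph satisfying condition (★), let s ∈ S(X), let x ∈ W_c(X) with xs ∉ W_c(X), and let w ∉ W_c(X) with ws ∈ W_c(X) and ws < w. Then D_{x,w}(q) = −1 if x = ws, and D_{x,w}(q) = 0 otherwise. -/

import Mathlib

/-!
Common setup: Coxeter systems, Bruhat order, fully commutative elements,
the Hecke algebra `H(X)`, the generalized Temperley--Lieb algebra `TL(X)`,
and the polynomial families `R`, `P` (Kazhdan--Lusztig), `D`, `a`, `L`.
-/

open LaurentPolynomial Polynomial

noncomputable section

namespace TLPaper

open scoped Classical

/-- The ring `A = ℤ[q^{1/2}, q^{-1/2}]`, modelled as Laurent polynomials over `ℤ`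
in the variable `T = q^{1/2}`. -/
abbrev A : Type := LaurentPolynomial ℤ

/-- The element `q = (q^{1/2})^2` of `A`. -/
def q : A := LaurentPolynomial.T 2

variable {B : Type*} {W : Type*} [Group W] {M : CoxeterMatrix B} (cs : CoxeterSystem M W)

/-- The Bruhat order on a Coxeter group: the reflexive-transitive closure of the relation
`x → xt` where `t` is a reflection and the length increases. -/
def bruhatLE : W → W → Prop :=
  Relation.ReflTransGen
    (fun x y => (∃ t : W, cs.IsReflection t ∧ y = x * t) ∧ cs.length x < cs.length y)

/-- Strict Bruhat order. -/
def bruhatLT (x w : W) : Prop := bruhatLE cs x w ∧ x ≠ w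

/-- A single commutation move on words: interchanging two adjacent commuting letters
(i.e. letters `i`, `j` with `M i j = 2`). -/
def CommMove (M : CoxeterMatrix B) (l₁ l₂ : List B) : Prop :=
  ∃ (a b : List B) (i j : B), M i j = 2 ∧ l₁ = a ++ i :: j :: b ∧ l₂ = a ++ j :: i :: b

/-- An element `w` is *fully commutative* if any reduced word for `w` can be obtained
from any other by a sequence of commutation moves. -/
def FullyCommutative (w : W) : Prop :=
  ∀ l₁ l₂ : List B, (cs.IsReduced l₁ ∧ cs.wordProd l₁ = w) →
    (cs.IsReduced l₂ ∧ cs.wordProd l₂ = w) →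
    Relation.ReflTransGen (CommMove M) l₁ l₂

/-- All the data of the paper: the Hecke algebra `H` of the Coxeter system `cs` with its
standard basis `Tw`, the `R`-polynomials, the Kazhdan--Lusztig polynomials `P`,
the generalized Temperley--Lieb algebra `TL = H/J` (with `proj` the canonical projection),
the `D`-polynomials, the `a`-polynomials, and the IC basis `c` with its `L`-polynomials.
The polynomial `L x w` is a polynomial in the variable `v = q^{-1/2}`;
all other polynomial families are polynomials in `q`. -/
structure TLContext {B : Type*} {W : Type*} [Group W] {M : CoxeterMatrix B}
    (cs : CoxeterSystem M W)
    (H : Type*) [Ring H] [Algebra A H] (TL : Type*) [Ring TL] [Algebra A TL] where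
  /-- The standard basis `{T_w}` of the Hecke algebra. -/
  Tw : W → H
  Tw_indep : LinearIndependent A Tw
  Tw_span : Submodule.span A (Set.range Tw) = ⊤
  Tw_one : Tw 1 = 1
  /-- Multiplication rule, case `ℓ(ws) > ℓ(w)`. -/
  Tw_mul_simple_of_lt : ∀ (w : W) (i : B),
    cs.length w < cs.length (w * cs.simple i) →
    Tw w * Tw (cs.simple i) = Tw (w * cs.simple i)
  /-- Multiplication rule, case `ℓ(ws) < ℓ(w)`. -/
  Tw_mul_simple_of_gt : ∀ (w : W) (i : B),
    cs.length (w * cs.simple i) < cs.length w →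
    Tw w * Tw (cs.simple i) = q • Tw (w * cs.simple i) + (q - 1) • Tw w
  /-- `Tinv w` is the inverse of `T_w` in `H`. -/
  Tinv : W → H
  Tw_mul_Tinv : ∀ w : W, Tw w * Tinv w = 1
  Tinv_mul_Tw : ∀ w : W, Tinv w * Tw w = 1
  /-- Bruhat lower sets are finite. -/
  finite_bruhatLE : ∀ w : W, {x | bruhatLE cs x w}.Finite
  /-- The `R`-polynomials. -/
  R : W → W → Polynomial ℤ
  R_self : ∀ w : W, R w w = 1
  R_eq_zero : ∀ x w : W, ¬ bruhatLE cs x w → R x w = 0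
  /-- `T_{w⁻¹}⁻¹ = ε_w q^{-ℓ(w)} Σ_{x ≤ w} ε_x R_{x,w}(q) T_x`. -/
  Tinv_eq : ∀ w : W, Tinv w⁻¹ =
    ((-1 : A) ^ cs.length w * LaurentPolynomial.T (-2 * (cs.length w : ℤ))) •
      ∑ᶠ x ∈ {x | bruhatLE cs x w},
        ((-1 : A) ^ cs.length x * Polynomial.aeval q (R x w)) • Tw x
  /-- The Kazhdan--Lusztig polynomials. -/
  P : W → W → Polynomial ℤ
  P_self : ∀ w : W, P w w = 1
  P_eq_zero : ∀ x w : W, ¬ bruhatLE cs x w → P x w = 0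
  /-- `deg P_{x,w} ≤ (ℓ(w) - ℓ(x) - 1)/2` for `x < w`. -/
  P_degree : ∀ x w : W, bruhatLT cs x w →
    2 * (P x w).natDegree + 1 ≤ cs.length w - cs.length x
  /-- The involution `ι` of the Hecke algebra. -/
  iotaH : H →+* H
  iotaH_involutive : ∀ h : H, iotaH (iotaH h) = h
  iotaH_Tw : ∀ w : W, iotaH (Tw w) = Tinv w⁻¹
  iotaH_smul : ∀ (a : A) (h : H),
    iotaH (a • h) = (LaurentPolynomial.invert (R := ℤ) a) • iotaH h
  /-- `ι` fixes the Kazhdan--Lusztig basis element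
  `C'_w = q^{-ℓ(w)/2} Σ_{x ≤ w} P_{x,w}(q) T_x`. -/
  iotaH_KL : ∀ w : W,
    iotaH ((LaurentPolynomial.T (-(cs.length w : ℤ)) : A) •
      ∑ᶠ x ∈ {x | bruhatLE cs x w}, (Polynomial.aeval q (P x w)) • Tw x) =
    (LaurentPolynomial.T (-(cs.length w : ℤ)) : A) •
      ∑ᶠ x ∈ {x | bruhatLE cs x w}, (Polynomial.aeval q (P x w)) • Tw x
  /-- The canonical projection `σ : H → TL = H/J`. -/
  proj : H →ₐ[A] TL
  proj_surjective : Function.Surjective proj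
  /-- The kernel of `σ` is the two-sided ideal `J` generated by the elements
  `Σ_{w ∈ ⟨s_i, s_j⟩} T_w`, over all pairs of non-commuting generators `s_i, s_j`
  such that `s_i s_j` has finite order. -/
  proj_ker : ∀ h : H, proj h = 0 ↔ h ∈ Submodule.span A
    {x : H | ∃ (i j : B) (a b : H), M i j ≠ 0 ∧ M i j ≠ 1 ∧ M i j ≠ 2 ∧
      x = a * (∑ᶠ u ∈ (Subgroup.closure {cs.simple i, cs.simple j} : Set W), Tw u) * b}
  /-- The images `t_w = σ(T_w)`, `w` fully commutative, are linearly independent. -/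
  t_indep : LinearIndependent A
    (fun x : {w : W // FullyCommutative cs w} => proj (Tw x.1))
  /-- The `D`-polynomials. -/
  D : W → W → Polynomial ℤ
  /-- `t_w = Σ_{x ∈ W_c, x ≤ w} D_{x,w}(q) t_x`. -/
  D_eq : ∀ w : W, proj (Tw w) =
    ∑ᶠ x ∈ {x | FullyCommutative cs x ∧ bruhatLE cs x w},
      (Polynomial.aeval q (D x w)) • proj (Tw x)
  D_self : ∀ w : W, FullyCommutative cs w → D w w = 1
  D_eq_zero : ∀ x w : W, ¬ (FullyCommutative cs x ∧ bruhatLE cs x w) → D x w = 0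
  /-- The `a`-polynomials. -/
  apol : W → W → Polynomial ℤ
  /-- `(t_{w⁻¹})⁻¹ = q^{-ℓ(w)} Σ_{y ∈ W_c, y ≤ w} a_{y,w}(q) t_y` for `w ∈ W_c`. -/
  apol_eq : ∀ w : W, FullyCommutative cs w →
    proj (Tinv w⁻¹) = (LaurentPolynomial.T (-2 * (cs.length w : ℤ)) : A) •
      ∑ᶠ y ∈ {y | FullyCommutative cs y ∧ bruhatLE cs y w},
        (Polynomial.aeval q (apol y w)) • proj (Tw y)
  apol_self : ∀ w : W, FullyCommutative cs w → apol w w = 1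
  apol_eq_zero : ∀ y w : W,
    ¬ (FullyCommutative cs y ∧ FullyCommutative cs w ∧ bruhatLE cs y w) → apol y w = 0
  /-- The involution `ι` of the Temperley--Lieb algebra. -/
  iotaTL : TL →+* TL
  iotaTL_involutive : ∀ x : TL, iotaTL (iotaTL x) = x
  iotaTL_t : ∀ w : W, iotaTL (proj (Tw w)) = proj (Tinv w⁻¹)
  iotaTL_smul : ∀ (a : A) (x : TL),
    iotaTL (a • x) = (LaurentPolynomial.invert (R := ℤ) a) • iotaTL x
  /-- The `L`-polynomials: `L x w` is a polynomial in the variable `v = q^{-1/2}`, and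
  `L_{x,w}(q^{-1/2})` is obtained by evaluating it at `T (-1) = q^{-1/2}`. -/
  L : W → W → Polynomial ℤ
  /-- The IC basis `{c_w}` of `TL`. -/
  c : W → TL
  /-- `c_w = Σ_{x ∈ W_c, x ≤ w} q^{-ℓ(x)/2} L_{x,w}(q^{-1/2}) t_x`. -/
  c_eq : ∀ w : W, FullyCommutative cs w →
    c w = ∑ᶠ x ∈ {x | FullyCommutative cs x ∧ bruhatLE cs x w},
      ((LaurentPolynomial.T (-(cs.length x : ℤ)) : A) *
        Polynomial.aeval (R := ℤ) ((LaurentPolynomial.T (-1) : A)) (L x w)) • proj (Tw x)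
  /-- Convention: `c_x = 0` for `x ∉ W_c`. -/
  c_eq_zero : ∀ w : W, ¬ FullyCommutative cs w → c w = 0
  /-- The IC basis is `ι`-invariant. -/
  c_invariant : ∀ w : W, FullyCommutative cs w → iotaTL (c w) = c w
  L_self : ∀ w : W, L w w = 1
  L_eq_zero : ∀ x w : W,
    ¬ (FullyCommutative cs x ∧ FullyCommutative cs w ∧ bruhatLE cs x w) → L x w = 0
  /-- `L_{x,w}(q^{-1/2}) ∈ q^{-1/2} ℤ[q^{-1/2}]` for `x < w`. -/
  L_coeff_zero : ∀ x w : W, bruhatLT cs x w → (L x w).coeff 0 = 0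

namespace TLContext

variable {B : Type*} {W : Type*} [Group W] {M : CoxeterMatrix B} {cs : CoxeterSystem M W}
  {H : Type*} [Ring H] [Algebra A H] {TL : Type*} [Ring TL] [Algebra A TL]
  (Ctx : TLContext cs H TL)

/-- `μ(x,w)`: the coefficient of `q^{(ℓ(w)-ℓ(x)-1)/2}` in the Kazhdan--Lusztig
polynomial `P_{x,w}(q)` (which is zero unless `ℓ(w) - ℓ(x)` is odd). -/
def mu (x w : W) : ℤ :=
  if Odd (cs.length w - cs.length x) then
    (Ctx.P x w).coeff ((cs.length w - cs.length x - 1) / 2)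
  else 0

/-- The Kazhdan--Lusztig basis element `C'_w = q^{-ℓ(w)/2} Σ_{x ≤ w} P_{x,w}(q) T_x`. -/
def KL (w : W) : H :=
  (LaurentPolynomial.T (-(cs.length w : ℤ)) : A) •
    ∑ᶠ x ∈ {x | bruhatLE cs x w}, (Polynomial.aeval q (Ctx.P x w)) • Ctx.Tw x

/-- Condition (★): the projection sends the Kazhdan--Lusztig basis element `C'_w`
to `c_w` if `w ∈ W_c` and to `0` otherwise. -/
def Star : Prop :=
  (∀ w : W, FullyCommutative cs w → Ctx.proj (Ctx.KL w) = Ctx.c w) ∧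
  (∀ w : W, ¬ FullyCommutative cs w → Ctx.proj (Ctx.KL w) = 0)

/-- `L_{x,w}(q^{-1/2})` as an element of `A`. -/
def Lq (x w : W) : A := Polynomial.aeval (R := ℤ) ((LaurentPolynomial.T (-1) : A)) (Ctx.L x w)

/-- `L_{x,w}(q^{1/2})` as an element of `A`. -/
def Lq' (x w : W) : A := Polynomial.aeval (R := ℤ) ((LaurentPolynomial.T 1 : A)) (Ctx.L x w)

end TLContext


/-! ### Auxiliary development for the proof of `statement11`. -/

section TraceMonoid

variable {B : Type*}

/-- The sublist of letters of `l` lying in `{a, b}`. -/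
def keep (a b : B) : List B → List B
  | [] => []
  | c :: t => if c = a ∨ c = b then c :: keep a b t else keep a b t

@[simp] theorem keep_nil (a b : B) : keep a b [] = [] := rfl

theorem keep_cons (a b c : B) (t : List B) :
    keep a b (c :: t) = if c = a ∨ c = b then c :: keep a b t else keep a b t := rfl

theorem keep_append (a b : B) (l₁ l₂ : List B) :
    keep a b (l₁ ++ l₂) = keep a b l₁ ++ keep a b l₂ := by
  induction l₁ with
  | nil => rfl
  | cons c t ih =>
    by_cases h : c = a ∨ c = b <;> simp [keep_cons, h, ih]

theorem mem_of_mem_keep {a b c : B} {l : List B} (h : c ∈ keep a b l) : c ∈ l := by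
  induction l with
  | nil => simpa using h
  | cons d t ih =>
    rw [keep_cons] at h
    by_cases hd : d = a ∨ d = b
    · rw [if_pos hd] at h
      rcases List.mem_cons.mp h with h | h
      · exact h ▸ List.mem_cons_self
      · exact List.mem_cons_of_mem _ (ih h)
    · rw [if_neg hd] at h
      exact List.mem_cons_of_mem _ (ih h)

theorem mem_keep_of_mem {a b c : B} {l : List B} (h : c ∈ l) (hc : c = a ∨ c = b) :
    c ∈ keep a b l := by
  induction l with
  | nil => simp at h
  | cons d t ih =>
    rw [keep_cons]
    rcases List.mem_cons.mp h with h | h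
    · subst h; rw [if_pos hc]; exact List.mem_cons_self
    · by_cases hd : d = a ∨ d = b
      · rw [if_pos hd]; exact List.mem_cons_of_mem _ (ih h)
      · rw [if_neg hd]; exact ih h

theorem CommMove.symm {M : CoxeterMatrix B} {l₁ l₂ : List B} (h : CommMove M l₁ l₂) :
    CommMove M l₂ l₁ := by
  obtain ⟨p, t, i, j, hij, h1, h2⟩ := h
  exact ⟨p, t, j, i, by rw [M.symmetric j i]; exact hij, h2, h1⟩

theorem commEquiv_symm {M : CoxeterMatrix B} {l₁ l₂ : List B}
    (h : Relation.ReflTransGen (CommMove M) l₁ l₂) :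
    Relation.ReflTransGen (CommMove M) l₂ l₁ := by
  induction h with
  | refl => exact Relation.ReflTransGen.refl
  | tail _ hbc ih => exact Relation.ReflTransGen.head hbc.symm ih

theorem keep_commMove {M : CoxeterMatrix B} {a b : B} (hab : M a b ≠ 2) {l₁ l₂ : List B}
    (h : CommMove M l₁ l₂) : keep a b l₁ = keep a b l₂ := by
  obtain ⟨p, t, i, j, hij, rfl, rfl⟩ := h
  rw [keep_append, keep_append]
  congr 1
  have hij' : i ≠ j := by
    intro h; rw [h, M.diagonal] at hij; omega
  by_cases hi : i = a ∨ i = b <;> by_cases hj : j = a ∨ j = b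
  · exfalso
    rcases hi with hi | hi <;> rcases hj with hj | hj
    · exact hij' (hi.trans hj.symm)
    · exact hab (hi ▸ hj ▸ hij)
    · exact hab (by rw [← hi, ← hj, M.symmetric]; exact hij)
    · exact hij' (hi.trans hj.symm)
  · simp [keep_cons, hi, hj]
  · simp [keep_cons, hi, hj]
  · simp [keep_cons, hi, hj]

theorem keep_commEquiv {M : CoxeterMatrix B} {a b : B} (hab : M a b ≠ 2) {l₁ l₂ : List B}
    (h : Relation.ReflTransGen (CommMove M) l₁ l₂) : keep a b l₁ = keep a b l₂ := by
  induction h with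
  | refl => rfl
  | tail _ hbc ih => exact ih.trans (keep_commMove hab hbc)

theorem CommMove.cons {M : CoxeterMatrix B} {l₁ l₂ : List B} (c : B) (h : CommMove M l₁ l₂) :
    CommMove M (c :: l₁) (c :: l₂) := by
  obtain ⟨p, t, i, j, hij, rfl, rfl⟩ := h
  exact ⟨c :: p, t, i, j, hij, rfl, rfl⟩

theorem commEquiv_cons {M : CoxeterMatrix B} {l₁ l₂ : List B} (c : B)
    (h : Relation.ReflTransGen (CommMove M) l₁ l₂) :
    Relation.ReflTransGen (CommMove M) (c :: l₁) (c :: l₂) := by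
  induction h with
  | refl => exact Relation.ReflTransGen.refl
  | tail _ hbc ih => exact ih.tail (hbc.cons c)

theorem commEquiv_front {M : CoxeterMatrix B} (c : B) (r : List B) :
    ∀ p : List B, (∀ d ∈ p, M d c = 2) →
      Relation.ReflTransGen (CommMove M) (p ++ c :: r) (c :: (p ++ r))
  | [], _ => Relation.ReflTransGen.refl
  | d :: p, h => by
    have h1 : Relation.ReflTransGen (CommMove M) (p ++ c :: r) (c :: (p ++ r)) :=
      commEquiv_front c r p (fun e he => h e (List.mem_cons_of_mem _ he))
    have h2 : Relation.ReflTransGen (CommMove M) (d :: (p ++ c :: r)) (d :: (c :: (p ++ r))) :=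
      commEquiv_cons d h1
    refine h2.tail ?_
    exact ⟨[], p ++ r, d, c, h d (List.mem_cons_self), rfl, rfl⟩

theorem exists_first_occ {c : B} {l : List B} (hl : c ∈ l) :
    ∃ p r, l = p ++ c :: r ∧ c ∉ p := by
  induction l with
  | nil => cases hl
  | cons d t ih =>
    by_cases hdc : d = c
    · exact ⟨[], t, by rw [hdc]; rfl, by simp⟩
    · have hct : c ∈ t := by
        rcases List.mem_cons.mp hl with h | h
        · exact absurd h.symm hdc
        · exact h
      obtain ⟨p, r, rfl, hnp⟩ := ih hct
      exact ⟨d :: p, r, rfl, by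
        intro hc
        rcases List.mem_cons.mp hc with h | h
        · exact hdc h.symm
        · exact hnp h⟩

theorem commEquiv_of_keep_eq {M : CoxeterMatrix B} :
    ∀ l₁ l₂ : List B, (∀ a b : B, M a b ≠ 2 → keep a b l₁ = keep a b l₂) →
      Relation.ReflTransGen (CommMove M) l₁ l₂
  | [], l₂, h => by
    cases l₂ with
    | nil => exact Relation.ReflTransGen.refl
    | cons d t =>
      exfalso
      have hd := h d d (by rw [M.diagonal]; omega)
      rw [keep_nil, keep_cons, if_pos (Or.inl rfl)] at hd
      exact List.cons_ne_nil _ _ hd.symm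
  | c :: t₁, l₂, h => by
    have hcc : (2 : ℕ) ≠ 2 → False := fun h => h rfl
    have hkc := h c c (by rw [M.diagonal]; omega)
    rw [keep_cons, if_pos (Or.inl rfl)] at hkc
    have hcl₂ : c ∈ l₂ := by
      apply mem_of_mem_keep (a := c) (b := c)
      rw [← hkc]
      exact List.mem_cons_self
    obtain ⟨p, r, rfl, hcp⟩ := exists_first_occ hcl₂
    have hcomm : ∀ d ∈ p, M d c = 2 := by
      intro d hd
      by_contra hdc
      have hcd : M c d ≠ 2 := by rw [M.symmetric]; exact hdc
      have h1 := h c d hcd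
      rw [keep_cons, if_pos (Or.inl rfl), keep_append, keep_cons, if_pos (Or.inl rfl)] at h1
      have hdk : d ∈ keep c d p := mem_keep_of_mem hd (Or.inr rfl)
      cases hkp : keep c d p with
      | nil => rw [hkp] at hdk; cases hdk
      | cons e u =>
        rw [hkp] at h1
        have he : e = c := by
          have := congrArg (fun l => l.head?) h1
          simpa using this.symm
        have hec : e ∈ p := mem_of_mem_keep (by rw [hkp]; exact List.mem_cons_self)
        exact hcp (he ▸ hec)
    have hfront : Relation.ReflTransGen (CommMove M) (p ++ c :: r) (c :: (p ++ r)) :=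
      commEquiv_front c r p hcomm
    have htails : ∀ a b : B, M a b ≠ 2 → keep a b t₁ = keep a b (p ++ r) := by
      intro a b hab
      have hk := (h a b hab).trans (keep_commEquiv hab hfront)
      rw [keep_cons, keep_cons] at hk
      by_cases hcm : c = a ∨ c = b
      · rw [if_pos hcm, if_pos hcm] at hk
        exact List.tail_eq_of_cons_eq hk
      · rw [if_neg hcm, if_neg hcm] at hk
        exact hk
    have hIH : Relation.ReflTransGen (CommMove M) t₁ (p ++ r) :=
      commEquiv_of_keep_eq t₁ (p ++ r) htails
    exact (commEquiv_cons c hIH).trans (commEquiv_symm hfront)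
  termination_by l₁ => l₁.length

theorem commEquiv_cancel_right {M : CoxeterMatrix B} {l₁ l₂ : List B} (j : B)
    (h : Relation.ReflTransGen (CommMove M) (l₁ ++ [j]) (l₂ ++ [j])) :
    Relation.ReflTransGen (CommMove M) l₁ l₂ := by
  apply commEquiv_of_keep_eq
  intro a b hab
  have hk := keep_commEquiv hab h
  rw [keep_append, keep_append] at hk
  exact List.append_cancel_right hk

end TraceMonoid


section CoxLemmas

variable {B : Type*} {W : Type*} [Group W] {M : CoxeterMatrix B} {cs : CoxeterSystem M W}

theorem bruhatLE_length {x w : W} (h : bruhatLE cs x w) : cs.length x ≤ cs.length w := by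
  induction h with
  | refl => exact le_refl _
  | tail _ h₂ ih => exact ih.trans (le_of_lt h₂.2)

theorem eq_of_bruhatLE_of_length_ge {x w : W} (h : bruhatLE cs x w)
    (h2 : cs.length w ≤ cs.length x) : x = w := by
  cases h with
  | refl => rfl
  | tail h₁ h₂ =>
    exfalso
    have := bruhatLE_length h₁
    omega

theorem length_lt_of_bruhatLE_ne {x w : W} (h : bruhatLE cs x w) (hne : x ≠ w) :
    cs.length x < cs.length w := by
  rcases lt_or_ge (cs.length x) (cs.length w) with h' | h'
  · exact h'
  · exact absurd (eq_of_bruhatLE_of_length_ge h h') hne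

theorem mul_simple_mul_simple (w : W) (i : B) : w * cs.simple i * cs.simple i = w := by
  rw [mul_assoc, cs.simple_mul_simple_self, mul_one]

theorem bruhatLE_descent {w : W} {i : B} (h : cs.length (w * cs.simple i) < cs.length w) :
    bruhatLE cs (w * cs.simple i) w :=
  Relation.ReflTransGen.single
    ⟨⟨cs.simple i, cs.isReflection_simple i, (mul_simple_mul_simple w i).symm⟩, h⟩

theorem FullyCommutative.of_descent {z : W} (hz : FullyCommutative cs z) {i : B}
    (hlen : cs.length (z * cs.simple i) < cs.length z) :
    FullyCommutative cs (z * cs.simple i) := by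
  intro l₁ l₂ h1 h2
  have hlz : cs.length z = cs.length (z * cs.simple i) + 1 := by
    rcases cs.length_mul_simple z i with h | h <;> omega
  apply commEquiv_cancel_right i
  apply hz
  · constructor
    · show cs.length (cs.wordProd (l₁ ++ [i])) = (l₁ ++ [i]).length
      rw [cs.wordProd_append, cs.wordProd_singleton, h1.2, mul_simple_mul_simple]
      simp only [List.length_append, List.length_singleton]
      rw [← h1.1, h1.2, ← hlz]
    · rw [cs.wordProd_append, cs.wordProd_singleton, h1.2, mul_simple_mul_simple]
  · constructor
    · show cs.length (cs.wordProd (l₂ ++ [i])) = (l₂ ++ [i]).length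
      rw [cs.wordProd_append, cs.wordProd_singleton, h2.2, mul_simple_mul_simple]
      simp only [List.length_append, List.length_singleton]
      rw [← h2.1, h2.2, ← hlz]
    · rw [cs.wordProd_append, cs.wordProd_singleton, h2.2, mul_simple_mul_simple]

theorem length_lt_of_spec {x : W} {i : B} (hx : FullyCommutative cs x)
    (hxs : ¬ FullyCommutative cs (x * cs.simple i)) :
    cs.length x < cs.length (x * cs.simple i) := by
  rcases lt_or_ge (cs.length x) (cs.length (x * cs.simple i)) with h | h
  · exact h
  · exfalso
    have hne := cs.length_mul_simple_ne x i
    exact hxs (hx.of_descent (lt_of_le_of_ne h hne))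

end CoxLemmas

section ALemmas

theorem aeval_q_eq (p : Polynomial ℤ) :
    Polynomial.aeval q p = Polynomial.toLaurent (p.comp (Polynomial.X ^ 2)) := by
  induction p using Polynomial.induction_on' with
  | add p r hp hr => rw [Polynomial.add_comp, map_add, map_add, hp, hr]
  | monomial n a =>
    rw [Polynomial.aeval_monomial, ← Polynomial.C_mul_X_pow_eq_monomial,
      Polynomial.mul_comp, Polynomial.C_comp, Polynomial.pow_comp, Polynomial.X_comp,
      ← pow_mul, map_mul, Polynomial.toLaurent_C, Polynomial.toLaurent_X_pow]
    have h1 : (algebraMap ℤ A) a = LaurentPolynomial.C a := by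
      rw [LaurentPolynomial.algebraMap_apply]
      norm_num
    rw [h1]
    congr 1
    show (LaurentPolynomial.T 2) ^ n = _
    rw [LaurentPolynomial.T_pow]
    congr 1
    push_cast
    ring

theorem aeval_q_injective : Function.Injective (fun p : Polynomial ℤ => Polynomial.aeval (R := ℤ) q p) := by
  intro p₁ p₂ h
  simp only [aeval_q_eq] at h
  have h2 : p₁.comp (Polynomial.X ^ 2) = p₂.comp (Polynomial.X ^ 2) :=
    Polynomial.toLaurent_injective h
  by_contra hne
  have hsub : (p₁ - p₂).comp (Polynomial.X ^ 2) = 0 := by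
    rw [Polynomial.sub_comp, h2, sub_self]
  have hp : p₁ - p₂ ≠ 0 := sub_ne_zero.mpr hne
  have hdeg : (Polynomial.X ^ 2 : Polynomial ℤ).natDegree ≠ 0 := by
    rw [Polynomial.natDegree_X_pow]; omega
  have hlc := Polynomial.leadingCoeff_comp (p := p₁ - p₂) (q := Polynomial.X ^ 2) hdeg
  rw [hsub] at hlc
  have hXlc : (Polynomial.X ^ 2 : Polynomial ℤ).leadingCoeff = 1 := by
    rw [Polynomial.leadingCoeff_X_pow]
  rw [hXlc, one_pow, mul_one] at hlc
  exact hp (Polynomial.leadingCoeff_eq_zero.mp hlc.symm)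

theorem isUnit_T_A (n : ℤ) : IsUnit (LaurentPolynomial.T (R := ℤ) n) :=
  LaurentPolynomial.isUnit_T n

end ALemmas

theorem ite_mem_range (P : Prop) [Decidable P] :
    (if P then (1 : A) else 0) ∈ (algebraMap ℤ A).range := by
  split_ifs
  · exact ⟨1, map_one _⟩
  · exact ⟨0, map_zero _⟩


namespace TLContext

variable {B : Type*} {W : Type*} [Group W] {M : CoxeterMatrix B} {cs : CoxeterSystem M W}
  {H : Type*} [Ring H] [Algebra A H] {TL : Type*} [Ring TL] [Algebra A TL]
  (Ctx : TLContext cs H TL)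

/-- The image `t_v = σ(T_v)` in `TL`. -/
def tw (v : W) : TL := Ctx.proj (Ctx.Tw v)

include Ctx in
theorem finite_fcle (v : W) : {y | FullyCommutative cs y ∧ bruhatLE cs y v}.Finite :=
  (Ctx.finite_bruhatLE v).subset fun _ hy => hy.2

theorem tw_eq_sum (v : W) :
    Ctx.tw v = ∑ y ∈ (Ctx.finite_fcle v).toFinset,
      (Polynomial.aeval q (Ctx.D y v)) • Ctx.tw y := by
  simp only [tw]
  have hD := Ctx.D_eq v
  rw [← (Ctx.finite_fcle v).coe_toFinset, finsum_mem_coe_finset] at hD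
  exact hD

theorem span_tw :
    ⊤ ≤ Submodule.span A
      (Set.range fun z : {z : W // FullyCommutative cs z} => Ctx.proj (Ctx.Tw z.1)) := by
  intro y _
  obtain ⟨h, rfl⟩ := Ctx.proj_surjective y
  have hh : h ∈ Submodule.span A (Set.range Ctx.Tw) := by rw [Ctx.Tw_span]; trivial
  have himg : Ctx.proj h ∈ Submodule.map (Ctx.proj.toLinearMap)
      (Submodule.span A (Set.range Ctx.Tw)) := ⟨h, hh, rfl⟩
  rw [Submodule.map_span] at himg
  refine Submodule.span_le.mpr ?_ himg
  rintro _ ⟨_, ⟨v, rfl⟩, rfl⟩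
  show Ctx.proj (Ctx.Tw v) ∈ _
  have := Ctx.tw_eq_sum v
  rw [show Ctx.proj (Ctx.Tw v) = Ctx.tw v from rfl, this]
  apply Submodule.sum_mem
  intro y hy
  apply Submodule.smul_mem
  apply Submodule.subset_span
  exact ⟨⟨y, ((Ctx.finite_fcle v).mem_toFinset.mp hy).1⟩, rfl⟩

/-- The basis `{t_z : z ∈ W_c}` of `TL`. -/
noncomputable def bas : Module.Basis {z : W // FullyCommutative cs z} A TL :=
  Module.Basis.mk Ctx.t_indep Ctx.span_tw

theorem bas_apply (z : {z : W // FullyCommutative cs z}) : Ctx.bas z = Ctx.tw z.1 :=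
  Module.Basis.mk_apply _ _ _

/-- The coordinate functional at a fully commutative element. -/
noncomputable def kap (x : W) (hx : FullyCommutative cs x) : TL →ₗ[A] A :=
  Ctx.bas.coord ⟨x, hx⟩

theorem kap_tw_of_fc {x y : W} (hx : FullyCommutative cs x) (hy : FullyCommutative cs y) :
    Ctx.kap x hx (Ctx.tw y) = if y = x then 1 else 0 := by
  rw [← Ctx.bas_apply ⟨y, hy⟩]
  show Ctx.bas.repr (Ctx.bas ⟨y, hy⟩) ⟨x, hx⟩ = _
  rw [Ctx.bas.repr_self_apply]
  by_cases h : y = x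
  · rw [if_pos h, if_pos (by exact Subtype.ext h)]
  · rw [if_neg h, if_neg (by intro hc; exact h (congrArg Subtype.val hc))]

theorem kap_tw (x : W) (hx : FullyCommutative cs x) (v : W) :
    Ctx.kap x hx (Ctx.tw v) = Polynomial.aeval q (Ctx.D x v) := by
  have := congrArg (Ctx.kap x hx) (Ctx.tw_eq_sum v)
  rw [map_sum] at this
  simp only [map_smul, smul_eq_mul] at this
  rw [this]
  rw [Finset.sum_eq_single x]
  · rw [Ctx.kap_tw_of_fc hx hx, if_pos rfl, mul_one]
  · intro y hy hyx
    have hyfc := ((Ctx.finite_fcle v).mem_toFinset.mp hy).1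
    rw [Ctx.kap_tw_of_fc hx hyfc, if_neg hyx, mul_zero]
  · intro hx'
    have : ¬ (FullyCommutative cs x ∧ bruhatLE cs x v) := by
      intro hc
      exact hx' ((Ctx.finite_fcle v).mem_toFinset.mpr hc)
    rw [Ctx.D_eq_zero x v this, map_zero, zero_mul]

theorem kap_tw_eq_zero {x : W} (hx : FullyCommutative cs x) {v : W}
    (hv : ¬ bruhatLE cs x v) : Ctx.kap x hx (Ctx.tw v) = 0 := by
  rw [Ctx.kap_tw, Ctx.D_eq_zero x v (fun hc => hv hc.2), map_zero]

theorem sum_P_eq_zero (hstar : Ctx.Star) {v : W} (hv : ¬ FullyCommutative cs v) :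
    ∑ y ∈ (Ctx.finite_bruhatLE v).toFinset,
      (Polynomial.aeval q (Ctx.P y v)) • Ctx.tw y = 0 := by
  simp only [tw]
  have h0 := hstar.2 v hv
  unfold KL at h0
  rw [← (Ctx.finite_bruhatLE v).coe_toFinset, finsum_mem_coe_finset] at h0
  rw [map_smul, map_sum] at h0
  simp only [map_smul] at h0
  obtain ⟨u, hu⟩ := isUnit_T_A (-(cs.length v : ℤ))
  rw [← hu] at h0
  have h2 := congrArg (fun m => (u⁻¹ : Aˣ) • m) h0
  simp only [smul_zero] at h2
  rwa [Units.smul_def, smul_smul, Units.inv_mul, one_smul] at h2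

theorem kap_coatom (hstar : Ctx.Star) {z v : W} (hz : FullyCommutative cs z)
    (hv : ¬ FullyCommutative cs v) (hl : cs.length z + 1 = cs.length v) :
    ∃ m : ℤ, Ctx.kap z hz (Ctx.tw v) = algebraMap ℤ A m := by
  have hsum := congrArg (Ctx.kap z hz) (Ctx.sum_P_eq_zero hstar hv)
  rw [map_sum, map_zero] at hsum
  simp only [map_smul, smul_eq_mul] at hsum
  have hvmem : v ∈ (Ctx.finite_bruhatLE v).toFinset :=
    (Ctx.finite_bruhatLE v).mem_toFinset.mpr Relation.ReflTransGen.refl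
  rw [← Finset.add_sum_erase _ _ hvmem] at hsum
  have herase : ∑ y ∈ ((Ctx.finite_bruhatLE v).toFinset.erase v),
      (Polynomial.aeval q (Ctx.P y v)) * Ctx.kap z hz (Ctx.tw y)
      = Polynomial.aeval q (Ctx.P z v) := by
    rw [Finset.sum_eq_single z]
    · rw [Ctx.kap_tw_of_fc hz hz, if_pos rfl, mul_one]
    · intro y hy hyz
      have hy1 := Finset.mem_of_mem_erase hy
      have hyv : y ≠ v := Finset.ne_of_mem_erase hy
      have hylev : bruhatLE cs y v := (Ctx.finite_bruhatLE v).mem_toFinset.mp hy1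
      have hylen : cs.length y < cs.length v := length_lt_of_bruhatLE_ne hylev hyv
      have hnz : ¬ bruhatLE cs z y := by
        intro hzy
        have h1 := bruhatLE_length hzy
        have hle : cs.length y ≤ cs.length z := by omega
        exact hyz (eq_of_bruhatLE_of_length_ge (cs := cs) (x := z) (w := y) hzy hle).symm
      rw [Ctx.kap_tw_eq_zero hz hnz, mul_zero]
    · intro hz'
      have hnzv : ¬ bruhatLE cs z v := by
        intro hzv
        apply hz'
        apply Finset.mem_erase.mpr
        exact ⟨fun he => by rw [he] at hl; omega, (Ctx.finite_bruhatLE v).mem_toFinset.mpr hzv⟩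
      rw [Ctx.P_eq_zero z v hnzv, map_zero, zero_mul]
  rw [herase, Ctx.P_self, map_one, one_mul] at hsum
  obtain ⟨m, hm⟩ : ∃ m : ℤ, Ctx.P z v = Polynomial.C m := by
    by_cases hzv : bruhatLE cs z v
    · have hlt : bruhatLT cs z v := ⟨hzv, fun he => by rw [he] at hl; omega⟩
      have hdeg := Ctx.P_degree z v hlt
      have hlen := bruhatLE_length hzv
      have hnd : (Ctx.P z v).natDegree = 0 := by omega
      exact ⟨(Ctx.P z v).coeff 0, Polynomial.eq_C_of_natDegree_eq_zero hnd⟩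
    · exact ⟨0, by rw [Ctx.P_eq_zero z v hzv, Polynomial.C_0]⟩
  refine ⟨-m, ?_⟩
  have : Ctx.kap z hz (Ctx.tw v) = -(Polynomial.aeval q (Ctx.P z v)) := by
    linear_combination hsum
  rw [this, hm, Polynomial.aeval_C, ← map_neg]

end TLContext


namespace TLContext

variable {B : Type*} {W : Type*} [Group W] {M : CoxeterMatrix B} {cs : CoxeterSystem M W}
  {H : Type*} [Ring H] [Algebra A H] {TL : Type*} [Ring TL] [Algebra A TL]
  (Ctx : TLContext cs H TL)

theorem tw_one : Ctx.tw 1 = 1 := by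
  simp only [tw, Ctx.Tw_one, map_one]

theorem tw_mul_simple_lt {z : W} {i : B} (h : cs.length z < cs.length (z * cs.simple i)) :
    Ctx.tw z * Ctx.tw (cs.simple i) = Ctx.tw (z * cs.simple i) := by
  simp only [tw, ← map_mul, Ctx.Tw_mul_simple_of_lt z i h]

theorem tw_mul_simple_gt {z : W} {i : B} (h : cs.length (z * cs.simple i) < cs.length z) :
    Ctx.tw z * Ctx.tw (cs.simple i) = q • Ctx.tw (z * cs.simple i) + (q - 1) • Ctx.tw z := by
  simp only [tw, ← map_mul, Ctx.Tw_mul_simple_of_gt z i h, map_add, map_smul]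

theorem ts_sq (i : B) :
    (Ctx.tw (cs.simple i) + 1) * (Ctx.tw (cs.simple i) + 1)
      = (q + 1) • (Ctx.tw (cs.simple i) + 1) := by
  have h1 : cs.length (cs.simple i * cs.simple i) < cs.length (cs.simple i) := by
    rw [cs.simple_mul_simple_self, cs.length_one, cs.length_simple]; omega
  have h2 := Ctx.tw_mul_simple_gt (z := cs.simple i) (i := i) h1
  rw [cs.simple_mul_simple_self, Ctx.tw_one] at h2
  have expand : (Ctx.tw (cs.simple i) + 1) * (Ctx.tw (cs.simple i) + 1)
      = Ctx.tw (cs.simple i) * Ctx.tw (cs.simple i)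
        + Ctx.tw (cs.simple i) + Ctx.tw (cs.simple i) + 1 := by
    noncomm_ring
  rw [expand, h2]
  simp only [smul_add, sub_smul, add_smul, one_smul]
  abel

theorem val_descent {i : B} {x : W} (hx : FullyCommutative cs x)
    (hxs : ¬ FullyCommutative cs (x * cs.simple i)) {z : W} (hz : FullyCommutative cs z)
    (hlen : cs.length (z * cs.simple i) < cs.length z) :
    Ctx.kap x hx (Ctx.tw z * (Ctx.tw (cs.simple i) + 1)) = 0 := by
  have hzs : FullyCommutative cs (z * cs.simple i) := hz.of_descent hlen
  rw [mul_add, mul_one, Ctx.tw_mul_simple_gt hlen, map_add, map_add, map_smul, map_smul,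
    Ctx.kap_tw_of_fc hx hzs, Ctx.kap_tw_of_fc hx hz]
  rw [if_neg (fun h => hxs (by rw [← h, mul_simple_mul_simple]; exact hz)),
    if_neg (fun h => hxs (by rw [← h]; exact hzs))]
  simp

theorem val_ascent_fc {i : B} {x : W} (hx : FullyCommutative cs x)
    (hxs : ¬ FullyCommutative cs (x * cs.simple i)) {z : W} (hz : FullyCommutative cs z)
    (hlen : cs.length z < cs.length (z * cs.simple i))
    (hzs : FullyCommutative cs (z * cs.simple i)) :
    Ctx.kap x hx (Ctx.tw z * (Ctx.tw (cs.simple i) + 1)) = 0 := by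
  rw [mul_add, mul_one, Ctx.tw_mul_simple_lt hlen, map_add,
    Ctx.kap_tw_of_fc hx hzs, Ctx.kap_tw_of_fc hx hz]
  rw [if_neg (fun h => hxs (by rw [← h, mul_simple_mul_simple]; exact hz)),
    if_neg (fun h => hxs (by rw [← h]; exact hzs))]
  simp

theorem val_ascent_nfc {i : B} {x : W} (hx : FullyCommutative cs x)
    {z : W} (hz : FullyCommutative cs z)
    (hlen : cs.length z < cs.length (z * cs.simple i)) :
    Ctx.kap x hx (Ctx.tw z * (Ctx.tw (cs.simple i) + 1))
      = Ctx.kap x hx (Ctx.tw (z * cs.simple i)) + (if z = x then 1 else 0) := by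
  rw [mul_add, mul_one, Ctx.tw_mul_simple_lt hlen, map_add, Ctx.kap_tw_of_fc hx hz]

theorem repr_coeff {i : B} {v : W} (hvs : FullyCommutative cs (v * cs.simple i))
    (z : {z : W // FullyCommutative cs z}) :
    (Ctx.bas.repr (Ctx.tw v + Ctx.tw (v * cs.simple i))) z
      = Polynomial.aeval q (Ctx.D z.1 v) + (if z.1 = v * cs.simple i then 1 else 0) := by
  rw [map_add, Finsupp.add_apply]
  have h1 : (Ctx.bas.repr (Ctx.tw v)) z = Polynomial.aeval q (Ctx.D z.1 v) := by
    rw [← Ctx.kap_tw z.1 z.2 v]; rfl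
  have h2 : (Ctx.bas.repr (Ctx.tw (v * cs.simple i))) z
      = (if z.1 = v * cs.simple i then 1 else 0) := by
    have := Ctx.kap_tw_of_fc (x := z.1) (y := v * cs.simple i) z.2 hvs
    rw [show (Ctx.bas.repr (Ctx.tw (v * cs.simple i))) z
        = Ctx.kap z.1 z.2 (Ctx.tw (v * cs.simple i)) from rfl, this]
    by_cases h : z.1 = v * cs.simple i
    · rw [if_pos h.symm, if_pos h]
    · rw [if_neg (fun hh => h hh.symm), if_neg h]
  rw [h1, h2]

theorem supp_length {i : B} {v : W} (hv : ¬ FullyCommutative cs v)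
    (hvs : FullyCommutative cs (v * cs.simple i))
    (hlvs : cs.length (v * cs.simple i) < cs.length v)
    (z : {z : W // FullyCommutative cs z})
    (hz : z ∈ (Ctx.bas.repr (Ctx.tw v + Ctx.tw (v * cs.simple i))).support) :
    cs.length z.1 < cs.length v := by
  have hne := Finsupp.mem_support_iff.mp hz
  rw [Ctx.repr_coeff hvs z] at hne
  by_cases hzvs : z.1 = v * cs.simple i
  · rw [hzvs]; exact hlvs
  · rw [if_neg hzvs, add_zero] at hne
    have hD : Ctx.D z.1 v ≠ 0 := fun h => hne (by rw [h, map_zero])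
    have hle : bruhatLE cs z.1 v := by
      by_contra hc
      exact hD (Ctx.D_eq_zero _ _ (fun hand => hc hand.2))
    exact length_lt_of_bruhatLE_ne hle (fun he => hv (he ▸ z.2))

theorem key_expansion {i : B} {v : W} (hvs : FullyCommutative cs (v * cs.simple i))
    (hlvs : cs.length (v * cs.simple i) < cs.length v)
    {x : W} (hx : FullyCommutative cs x) :
    (q + 1) * Ctx.kap x hx (Ctx.tw v + Ctx.tw (v * cs.simple i))
      = ∑ z ∈ (Ctx.bas.repr (Ctx.tw v + Ctx.tw (v * cs.simple i))).support,
          (Ctx.bas.repr (Ctx.tw v + Ctx.tw (v * cs.simple i))) z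
            * Ctx.kap x hx (Ctx.tw z.1 * (Ctx.tw (cs.simple i) + 1)) := by
  set N := Ctx.tw v + Ctx.tw (v * cs.simple i) with hN
  have hvss : v * cs.simple i * cs.simple i = v := mul_simple_mul_simple v i
  have hlen2 : cs.length (v * cs.simple i) < cs.length ((v * cs.simple i) * cs.simple i) := by
    rw [hvss]; exact hlvs
  have hNfac : N = Ctx.tw (v * cs.simple i) * (Ctx.tw (cs.simple i) + 1) := by
    rw [mul_add, mul_one, Ctx.tw_mul_simple_lt hlen2, hvss, hN, add_comm]
  have hNmul : N * (Ctx.tw (cs.simple i) + 1) = (q + 1) • N := by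
    rw [hNfac, mul_assoc, Ctx.ts_sq i, mul_smul_comm]
  have hrep : N = ∑ z ∈ (Ctx.bas.repr N).support, (Ctx.bas.repr N) z • Ctx.bas z := by
    conv_lhs => rw [← Ctx.bas.linearCombination_repr N]
    rw [Finsupp.linearCombination_apply, Finsupp.sum]
  have h3 := congrArg (fun m => m * (Ctx.tw (cs.simple i) + 1)) hrep
  simp only [Finset.sum_mul] at h3
  calc (q + 1) * Ctx.kap x hx N = Ctx.kap x hx ((q + 1) • N) := by
        rw [map_smul, smul_eq_mul]
    _ = Ctx.kap x hx (N * (Ctx.tw (cs.simple i) + 1)) := by rw [hNmul]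
    _ = ∑ z ∈ (Ctx.bas.repr N).support, (Ctx.bas.repr N) z
          * Ctx.kap x hx (Ctx.tw z.1 * (Ctx.tw (cs.simple i) + 1)) := by
        rw [h3, map_sum]
        refine Finset.sum_congr rfl fun z hz => ?_
        rw [smul_mul_assoc, map_smul, smul_eq_mul, Ctx.bas_apply]

end TLContext


namespace TLContext

variable {B : Type*} {W : Type*} [Group W] {M : CoxeterMatrix B} {cs : CoxeterSystem M W}
  {H : Type*} [Ring H] [Algebra A H] {TL : Type*} [Ring TL] [Algebra A TL]
  (Ctx : TLContext cs H TL)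


theorem main (hstar : Ctx.Star) (i : B) :
    ∀ n : ℕ, ∀ v : W, cs.length v = n → ¬ FullyCommutative cs v →
      FullyCommutative cs (v * cs.simple i) → cs.length (v * cs.simple i) < cs.length v →
      ∀ (x : W) (hx : FullyCommutative cs x), ¬ FullyCommutative cs (x * cs.simple i) →
        Ctx.kap x hx (Ctx.tw v) = (if x = v * cs.simple i then -1 else 0) := by
  intro n
  induction n using Nat.strong_induction_on with
  | _ n IH =>
  intro v hvn hv hvs hlvs
  -- Step 1 : the statement for coatom-level special elements x.
  have step1 : ∀ (x : W) (hx : FullyCommutative cs x), ¬ FullyCommutative cs (x * cs.simple i) →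
      cs.length x + 1 = cs.length v →
      Ctx.kap x hx (Ctx.tw v) = (if x = v * cs.simple i then -1 else 0) := by
    intro x hx hxs hcoat
    have hexp := Ctx.key_expansion (i := i) (v := v) hvs hlvs hx
    have hmem : ∀ z ∈ (Ctx.bas.repr (Ctx.tw v + Ctx.tw (v * cs.simple i))).support,
        (Ctx.bas.repr (Ctx.tw v + Ctx.tw (v * cs.simple i))) z
          * Ctx.kap x hx (Ctx.tw z.1 * (Ctx.tw (cs.simple i) + 1))
          ∈ (algebraMap ℤ A).range := by
      intro z hzsupp
      have hzlen : cs.length z.1 < cs.length v := Ctx.supp_length hv hvs hlvs z hzsupp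
      rcases cs.length_mul_simple z.1 i with hcase | hcase
      · -- ascent
        have hlt : cs.length z.1 < cs.length (z.1 * cs.simple i) := by omega
        by_cases hzfc : FullyCommutative cs (z.1 * cs.simple i)
        · rw [Ctx.val_ascent_fc hx hxs z.2 hlt hzfc, mul_zero]
          exact zero_mem _
        · by_cases htop : cs.length z.1 + 1 = cs.length v
          · obtain ⟨m₁, hm₁⟩ := Ctx.kap_coatom hstar z.2 hv htop
            have hztop : cs.length x + 1 = cs.length (z.1 * cs.simple i) := by omega
            obtain ⟨m₂, hm₂⟩ := Ctx.kap_coatom hstar hx hzfc hztop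
            have h₁ : Polynomial.aeval q (Ctx.D z.1 v) = algebraMap ℤ A m₁ := by
              rw [← Ctx.kap_tw z.1 z.2 v]; exact hm₁
            rw [Ctx.val_ascent_nfc hx z.2 hlt, Ctx.repr_coeff hvs z, h₁, hm₂]
            exact Subring.mul_mem _
              (Subring.add_mem _ ⟨m₁, rfl⟩ (ite_mem_range _))
              (Subring.add_mem _ ⟨m₂, rfl⟩ (ite_mem_range _))
          · have h0 : Ctx.kap x hx (Ctx.tw (z.1 * cs.simple i)) = 0 := by
              apply Ctx.kap_tw_eq_zero hx
              intro hle
              have h1 := bruhatLE_length hle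
              have heq : x = z.1 * cs.simple i :=
                eq_of_bruhatLE_of_length_ge (cs := cs) hle (by omega)
              exact hzfc (heq ▸ hx)
            have hzx : z.1 ≠ x := by
              intro h
              have := congrArg cs.length h
              omega
            rw [Ctx.val_ascent_nfc hx z.2 hlt, h0, if_neg hzx, add_zero, mul_zero]
            exact zero_mem _
      · -- descent
        have hgt : cs.length (z.1 * cs.simple i) < cs.length z.1 := by
          have := cs.length_mul_simple_ne z.1 i; omega
        rw [Ctx.val_descent hx hxs z.2 hgt, mul_zero]
        exact zero_mem _
    obtain ⟨d, hd⟩ := Subring.sum_mem ((algebraMap ℤ A).range) hmem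
    obtain ⟨m₀, hm₀⟩ := Ctx.kap_coatom hstar hx hv hcoat
    have hLHS : Ctx.kap x hx (Ctx.tw v + Ctx.tw (v * cs.simple i))
        = algebraMap ℤ A (m₀ + (if x = v * cs.simple i then 1 else 0)) := by
      rw [map_add, hm₀, Ctx.kap_tw_of_fc hx hvs, map_add]
      congr 1
      by_cases h : x = v * cs.simple i
      · rw [if_pos h.symm, if_pos h, map_one]
      · rw [if_neg (fun hh => h hh.symm), if_neg h, map_zero]
    have heq : (q + 1) * algebraMap ℤ A (m₀ + (if x = v * cs.simple i then 1 else 0))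
        = algebraMap ℤ A d := by
      rw [← hLHS, hexp, hd]
    have hpoly : Polynomial.aeval (R := ℤ) q
        ((Polynomial.X + 1) * Polynomial.C (m₀ + (if x = v * cs.simple i then 1 else 0)))
        = Polynomial.aeval (R := ℤ) q (Polynomial.C d) := by
      rw [map_mul, map_add, Polynomial.aeval_X, Polynomial.aeval_C, Polynomial.aeval_C, map_one]
      exact heq
    have hpc := aeval_q_injective hpoly
    have h5 : (Polynomial.X + 1) * Polynomial.C (m₀ + (if x = v * cs.simple i then 1 else 0))
        = Polynomial.C (m₀ + (if x = v * cs.simple i then 1 else 0)) * Polynomial.X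
          + Polynomial.C (m₀ + (if x = v * cs.simple i then 1 else 0)) := by ring
    rw [h5] at hpc
    have hcoeff := congrArg (fun p => Polynomial.coeff p 1) hpc
    simp only [Polynomial.coeff_add, Polynomial.coeff_C_mul, Polynomial.coeff_X_one,
      Polynomial.coeff_C, mul_one] at hcoeff
    norm_num at hcoeff
    -- hcoeff : m₀ + (if ...) = 0
    rw [hm₀]
    by_cases h : x = v * cs.simple i
    · rw [if_pos h] at hcoeff ⊢
      have : m₀ = -1 := by omega
      rw [this, map_neg, map_one]
    · rw [if_neg h] at hcoeff ⊢
      have : m₀ = 0 := by omega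
      rw [this, map_zero]
  -- Step 2 : the general case.
  intro x hx hxs
  have hexp := Ctx.key_expansion (i := i) (v := v) hvs hlvs hx
  have hzero : ∀ z ∈ (Ctx.bas.repr (Ctx.tw v + Ctx.tw (v * cs.simple i))).support,
      (Ctx.bas.repr (Ctx.tw v + Ctx.tw (v * cs.simple i))) z
        * Ctx.kap x hx (Ctx.tw z.1 * (Ctx.tw (cs.simple i) + 1)) = 0 := by
    intro z hzsupp
    have hzlen : cs.length z.1 < cs.length v := Ctx.supp_length hv hvs hlvs z hzsupp
    rcases cs.length_mul_simple z.1 i with hcase | hcase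
    · have hlt : cs.length z.1 < cs.length (z.1 * cs.simple i) := by omega
      by_cases hzfc : FullyCommutative cs (z.1 * cs.simple i)
      · rw [Ctx.val_ascent_fc hx hxs z.2 hlt hzfc, mul_zero]
      · by_cases htop : cs.length z.1 + 1 = cs.length v
        · -- coefficient vanishes by step1 applied to z
          have hstep := step1 z.1 z.2 hzfc htop
          rw [Ctx.repr_coeff hvs z, ← Ctx.kap_tw z.1 z.2 v, hstep]
          by_cases h : z.1 = v * cs.simple i
          · rw [if_pos h, if_pos h, neg_add_cancel, zero_mul]
          · rw [if_neg h, if_neg h, add_zero, zero_mul]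
        · -- value vanishes by the induction hypothesis applied to z * s
          have hzz : z.1 * cs.simple i * cs.simple i = z.1 := mul_simple_mul_simple z.1 i
          have hIH := IH (cs.length (z.1 * cs.simple i)) (by omega) (z.1 * cs.simple i) rfl
            hzfc (by rw [hzz]; exact z.2) (by rw [hzz]; omega) x hx hxs
          rw [Ctx.val_ascent_nfc hx z.2 hlt, hIH, hzz]
          by_cases h : x = z.1
          · rw [if_pos h, if_pos h.symm, neg_add_cancel, mul_zero]
          · rw [if_neg h, if_neg (fun hh => h hh.symm), add_zero, mul_zero]
    · have hgt : cs.length (z.1 * cs.simple i) < cs.length z.1 := by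
        have := cs.length_mul_simple_ne z.1 i; omega
      rw [Ctx.val_descent hx hxs z.2 hgt, mul_zero]
  have heq0 : (q + 1) * Ctx.kap x hx (Ctx.tw v + Ctx.tw (v * cs.simple i)) = 0 := by
    rw [hexp]
    exact Finset.sum_eq_zero hzero
  have hkapN : Ctx.kap x hx (Ctx.tw v + Ctx.tw (v * cs.simple i))
      = Polynomial.aeval q (Ctx.D x v) + (if x = v * cs.simple i then (1 : A) else 0) := by
    rw [map_add, Ctx.kap_tw x hx v, Ctx.kap_tw_of_fc hx hvs]
    congr 1
    by_cases h : x = v * cs.simple i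
    · rw [if_pos h.symm, if_pos h]
    · rw [if_neg (fun hh => h hh.symm), if_neg h]
  have hD : (Polynomial.X + 1)
      * (Ctx.D x v + Polynomial.C (if x = v * cs.simple i then 1 else 0)) = 0 := by
    apply aeval_q_injective
    show Polynomial.aeval q _ = Polynomial.aeval q (0 : Polynomial ℤ)
    simp only [map_mul, map_add, map_one, map_zero, Polynomial.aeval_X, Polynomial.aeval_C,
      apply_ite (algebraMap ℤ A)]
    rw [← hkapN]
    exact heq0
  have hXne : (Polynomial.X + 1 : Polynomial ℤ) ≠ 0 := by
    intro h
    have := congrArg (fun p => Polynomial.coeff p 1) h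
    simp [Polynomial.coeff_add, Polynomial.coeff_X_one, Polynomial.coeff_one] at this
  have hsum0 := (mul_eq_zero.mp hD).resolve_left hXne
  have hDval : Ctx.D x v = - Polynomial.C (if x = v * cs.simple i then 1 else 0) :=
    eq_neg_of_add_eq_zero_left hsum0
  rw [Ctx.kap_tw x hx v, hDval, map_neg, Polynomial.aeval_C, apply_ite (algebraMap ℤ A),
    map_one, map_zero]
  by_cases h : x = v * cs.simple i
  · rw [if_pos h, if_pos h]
  · rw [if_neg h, if_neg h, neg_zero]

end TLContext

/-- Lemma (paper, Lem. `ddelta`): if `X` satisfies (★), `s ∈ S`, `x ∈ W_c` with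
`xs ∉ W_c`, and `w ∉ W_c` with `w > ws ∈ W_c`, then `D_{x,w} = -δ_{x,ws}`. -/
theorem statement11 {B : Type*} {W : Type*} [Group W] {M : CoxeterMatrix B} {cs : CoxeterSystem M W}
    {H : Type*} [Ring H] [Algebra A H] {TL : Type*} [Ring TL] [Algebra A TL]
    (Ctx : TLContext cs H TL)
    (hstar : Ctx.Star) (i : B) (x w : W)
    (hx : FullyCommutative cs x) (hxs : ¬ FullyCommutative cs (x * cs.simple i))
    (hw : ¬ FullyCommutative cs w) (hws : FullyCommutative cs (w * cs.simple i))
    (hlws : cs.length (w * cs.simple i) < cs.length w) :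
    Ctx.D x w = (if x = w * cs.simple i then -1 else 0) := by
  apply aeval_q_injective
  show Polynomial.aeval q (Ctx.D x w) = Polynomial.aeval q _
  rw [← Ctx.kap_tw x hx w,
    Ctx.main hstar i (cs.length w) w rfl hw hws hlws x hx hxs]
  by_cases h : x = w * cs.simple i
  · rw [if_pos h, if_pos h, map_neg, map_one]
  · rw [if_neg h, if_neg h, map_zero]

end TLPaper
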